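/- Let w : [0,∞) → ℝ be bounded, continuous, nondecreasing and nonpositive, and define (Gw)(φ) = ∫_0^φ ψ(z)·z^{γ−2}·e^{−β/z}·(g(z) + λ₀·(Kw)(z)) dz for φ > 0. Then: (i) the integrand is Lebesgue integrable on (0, φ) for every φ > 0, so Gw is well defined; (ii) the equation (Gw)(φ) = 0 has exactly one solution φ[w] in (0,∞); (iii) (Gw)(φ) < 0 for every φ ∈ (0, φ[w]) and (Gw)(φ) > 0 for every φ ∈ (φ[w], ∞); (iv) φ_ℓ[w] ≤ φ[w] ≤ φ[w₀], where φ_ℓ[w] denotes the unique positive zero of φ ↦ g(φ) + λ₀·(Kw)(φ) and w₀ denotes the constant function equal to −sup_{x≥0}|w(x)|. -/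

import Mathlib

open MeasureTheory

/-- The jump operator `K`: `(Kw)(φ) = ∫_E w((λ₁/λ₀) f(z) φ) ν₀(dz)`. -/
noncomputable def Kop {E : Type*} [MeasurableSpace E] (ν₀ : Measure E)
    (f : E → ℝ) (lam0 lam1 : ℝ) (w : ℝ → ℝ) (φ : ℝ) : ℝ :=
  ∫ z, w (lam1 / lam0 * f z * φ) ∂ν₀

/-- The function `Gw` of (4.17):
`(Gw)(φ) = ∫_0^φ ψ(z) z^(γ-2) e^(-β/z) (g(z) + λ₀ (Kw)(z)) dz`. -/
noncomputable def Gop {E : Type*} [MeasurableSpace E] (ν₀ : Measure E)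
    (f : E → ℝ) (lam lam0 lam1 c γ β : ℝ) (ψ : ℝ → ℝ) (w : ℝ → ℝ) (φ : ℝ) : ℝ :=
  ∫ z in Set.Ioo (0 : ℝ) φ,
    ψ z * z ^ (γ - 2) * Real.exp (-β / z) *
      ((z - lam / c) + lam0 * Kop ν₀ f lam0 lam1 w z)

/- ### Auxiliary lemmas -/

lemma vbound (s b φ : ℝ) (hb : 0 < b) (hφ : 0 < φ) :
    ∃ D : ℝ, 0 ≤ D ∧ ∀ z ∈ Set.Ioo (0:ℝ) φ, z ^ s * Real.exp (-b / z) ≤ D := by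
  set a := b / (2 * (|s| + 1)) with ha
  have ha0 : 0 < a := by positivity
  refine ⟨Real.exp (|s| * (φ + |1 + Real.log a|)), Real.exp_nonneg _, ?_⟩
  rintro z ⟨hz0, hzφ⟩
  rw [Real.rpow_def_of_pos hz0, ← Real.exp_add]
  apply Real.exp_le_exp.2
  have h1 : Real.log z ≤ φ := (Real.log_le_sub_one_of_pos hz0).trans (by linarith)
  have h2 : -Real.log z ≤ a / z + |1 + Real.log a| := by
    have : Real.log (a / z) ≤ a / z - 1 := Real.log_le_sub_one_of_pos (by positivity)
    rw [Real.log_div ha0.ne' hz0.ne'] at this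
    have habs : -(1 + Real.log a) ≤ |1 + Real.log a| := neg_le_abs _
    linarith
  have h3 : s * Real.log z ≤ |s| * (φ + a / z + |1 + Real.log a|) := by
    have h4 : |Real.log z| ≤ φ + a / z + |1 + Real.log a| := by
      rw [abs_le]
      have haz : 0 < a / z := by positivity
      constructor
      · linarith
      · linarith [abs_nonneg (1 + Real.log a)]
    calc s * Real.log z ≤ |s * Real.log z| := le_abs_self _
      _ = |s| * |Real.log z| := abs_mul _ _
      _ ≤ |s| * (φ + a / z + |1 + Real.log a|) :=
          mul_le_mul_of_nonneg_left h4 (abs_nonneg s)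
  have hkey : |s| * a ≤ b / 2 := by
    rw [ha, mul_div_assoc']
    rw [div_le_div_iff₀ (by positivity) (by norm_num : (0:ℝ) < 2)]
    nlinarith [abs_nonneg s, hb.le]
  have h5 : |s| * (a / z) ≤ (b / 2) / z := by
    rw [mul_div_assoc']; gcongr
  have h6 : (b/2)/z ≤ b/z := by gcongr; linarith
  have e1 : |s| * (φ + a / z + |1 + Real.log a|)
      = |s| * φ + |s| * (a / z) + |s| * |1 + Real.log a| := by ring
  have e2 : |s| * (φ + |1 + Real.log a|) = |s| * φ + |s| * |1 + Real.log a| := by ring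
  have e3 : -b / z = -(b / z) := neg_div _ _
  linarith [h3, h5, h6]

section kop

variable {E : Type*} [MeasurableSpace E] (ν₀ : Measure E) [IsProbabilityMeasure ν₀]
  (f : E → ℝ) (hf : Measurable f) (hf0 : ∀ z, 0 ≤ f z) (lam0 lam1 : ℝ)
  (hc0 : 0 ≤ lam1 / lam0)
  (w : ℝ → ℝ) (M : ℝ) (hM : ∀ x : ℝ, 0 ≤ x → |w x| ≤ M)
  (hwcont : ContinuousOn w (Set.Ici (0 : ℝ)))

include hf0 hc0 in
lemma kop_arg_nonneg (z : E) {φ : ℝ} (hφ : 0 ≤ φ) : 0 ≤ lam1 / lam0 * f z * φ :=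
  mul_nonneg (mul_nonneg hc0 (hf0 z)) hφ

include hf hf0 hc0 hwcont in
lemma kop_aesm {φ : ℝ} (hφ : 0 ≤ φ) :
    AEStronglyMeasurable (fun z => w (lam1 / lam0 * f z * φ)) ν₀ := by
  have h1 : Measurable (fun z : E =>
      (⟨lam1 / lam0 * f z * φ, kop_arg_nonneg f hf0 lam0 lam1 hc0 z hφ⟩ : Set.Ici (0:ℝ))) :=
    Measurable.subtype_mk (((measurable_const.mul hf).mul measurable_const))
  exact ((hwcont.restrict.measurable.comp h1)).aestronglyMeasurable

include hf hf0 hc0 hwcont hM in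
lemma kop_intg {φ : ℝ} (hφ : 0 ≤ φ) :
    Integrable (fun z => w (lam1 / lam0 * f z * φ)) ν₀ := by
  refine (integrable_const M).mono'
    (kop_aesm ν₀ f hf hf0 lam0 lam1 hc0 w hwcont hφ) (Filter.Eventually.of_forall fun z => ?_)
  rw [Real.norm_eq_abs]
  exact hM _ (kop_arg_nonneg f hf0 lam0 lam1 hc0 z hφ)

include hf hf0 hc0 hwcont hM in
lemma kop_abs_le {φ : ℝ} (hφ : 0 ≤ φ) : |Kop ν₀ f lam0 lam1 w φ| ≤ M := by
  rw [← Real.norm_eq_abs, Kop]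
  have := norm_integral_le_of_norm_le_const (μ := ν₀)
    (f := fun z => w (lam1 / lam0 * f z * φ)) (C := M)
    (Filter.Eventually.of_forall fun z => by
      rw [Real.norm_eq_abs]; exact hM _ (kop_arg_nonneg f hf0 lam0 lam1 hc0 z hφ))
  simpa using this

include hf hf0 hc0 hwcont hM in
lemma kop_mono (hwmono : ∀ x y : ℝ, 0 ≤ x → x ≤ y → w x ≤ w y)
    {x y : ℝ} (hx : 0 ≤ x) (hxy : x ≤ y) :
    Kop ν₀ f lam0 lam1 w x ≤ Kop ν₀ f lam0 lam1 w y := by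
  refine integral_mono (kop_intg ν₀ f hf hf0 lam0 lam1 hc0 w M hM hwcont hx)
    (kop_intg ν₀ f hf hf0 lam0 lam1 hc0 w M hM hwcont (hx.trans hxy)) fun z => ?_
  exact hwmono _ _ (kop_arg_nonneg f hf0 lam0 lam1 hc0 z hx)
    (mul_le_mul_of_nonneg_left hxy (mul_nonneg hc0 (hf0 z)))

include hc0 hf0 in
lemma kop_nonpos (hwnp : ∀ x : ℝ, 0 ≤ x → w x ≤ 0) {φ : ℝ} (hφ : 0 ≤ φ) :
    Kop ν₀ f lam0 lam1 w φ ≤ 0 :=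
  integral_nonpos fun z => hwnp _ (kop_arg_nonneg f hf0 lam0 lam1 hc0 z hφ)

include hf hf0 hc0 hwcont hM in
lemma kop_continuousOn : ContinuousOn (Kop ν₀ f lam0 lam1 w) (Set.Ici (0:ℝ)) := by
  refine continuousOn_of_dominated
    (F := fun φ z => w (lam1 / lam0 * f z * φ)) (bound := fun _ => M)
    (fun φ hφ => kop_aesm ν₀ f hf hf0 lam0 lam1 hc0 w hwcont hφ)
    (fun φ hφ => Filter.Eventually.of_forall fun z => by
      rw [Real.norm_eq_abs]; exact hM _ (kop_arg_nonneg f hf0 lam0 lam1 hc0 z hφ))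
    (integrable_const M)
    (Filter.Eventually.of_forall fun z => ?_)
  refine hwcont.comp ((continuous_mul_left (lam1 / lam0 * f z)).continuousOn) fun φ hφ => ?_
  exact mul_nonneg (mul_nonneg hc0 (hf0 z)) hφ

include hf hf0 hc0 hwcont in
lemma kop_lower (hwbdd : ∃ M' : ℝ, ∀ x : ℝ, 0 ≤ x → |w x| ≤ M') {φ : ℝ} (hφ : 0 ≤ φ) :
    -sSup ((fun x => |w x|) '' Set.Ici (0:ℝ)) ≤ Kop ν₀ f lam0 lam1 w φ := by
  obtain ⟨M', hM'⟩ := hwbdd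
  have hbdd : BddAbove ((fun x => |w x|) '' Set.Ici (0:ℝ)) := by
    refine ⟨M', ?_⟩; rintro _ ⟨x, hx, rfl⟩; exact hM' x hx
  have hS : ∀ x : ℝ, 0 ≤ x → |w x| ≤ sSup ((fun x => |w x|) '' Set.Ici (0:ℝ)) :=
    fun x hx => le_csSup hbdd ⟨x, hx, rfl⟩
  have hle : ∀ z : E, -sSup ((fun x => |w x|) '' Set.Ici (0:ℝ)) ≤ w (lam1 / lam0 * f z * φ) := by
    intro z
    have h := hS _ (kop_arg_nonneg f hf0 lam0 lam1 hc0 z hφ)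
    have := neg_abs_le (w (lam1 / lam0 * f z * φ))
    linarith
  calc -sSup ((fun x => |w x|) '' Set.Ici (0:ℝ))
      = ∫ _ : E, -sSup ((fun x => |w x|) '' Set.Ici (0:ℝ)) ∂ν₀ := by simp
    _ ≤ Kop ν₀ f lam0 lam1 w φ :=
        integral_mono (integrable_const _)
          (kop_intg ν₀ f hf hf0 lam0 lam1 hc0 w M' hM' hwcont hφ) hle

end kop

lemma integrand_integrable (γ β lam c lam0 : ℝ) (hβ : 0 < β) (hlam0 : 0 ≤ lam0)
    (ψ K : ℝ → ℝ) (hψc : ContinuousOn ψ (Set.Ioi (0:ℝ)))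
    (hψpos : ∀ y : ℝ, 0 < y → 0 < ψ y)
    (hψmono : ∀ x y : ℝ, 0 < x → x ≤ y → ψ x ≤ ψ y)
    (hK : ContinuousOn K (Set.Ici (0:ℝ))) (MK : ℝ) (hMK : ∀ z : ℝ, 0 ≤ z → |K z| ≤ MK)
    (φ : ℝ) (hφ : 0 < φ) :
    IntegrableOn (fun z => ψ z * z ^ (γ - 2) * Real.exp (-β / z) *
      ((z - lam / c) + lam0 * K z)) (Set.Ioo (0:ℝ) φ) := by
  obtain ⟨D, hD0, hD⟩ := vbound (γ - 2) β φ hβ hφ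
  have hsub : Set.Ioo (0:ℝ) φ ⊆ Set.Ioi 0 := Set.Ioo_subset_Ioi_self
  have hcont : ContinuousOn (fun z => ψ z * z ^ (γ - 2) * Real.exp (-β / z) *
      ((z - lam / c) + lam0 * K z)) (Set.Ioo (0:ℝ) φ) := by
    have h1 : ContinuousOn (fun z : ℝ => z ^ (γ - 2)) (Set.Ioo (0:ℝ) φ) := fun z hz =>
      (Real.continuousAt_rpow_const z _ (Or.inl (ne_of_gt hz.1))).continuousWithinAt
    have h2 : ContinuousOn (fun z : ℝ => Real.exp (-β / z)) (Set.Ioo (0:ℝ) φ) :=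
      (Real.continuous_exp.comp_continuousOn
        (continuousOn_const.div continuousOn_id fun z hz => ne_of_gt hz.1))
    exact (((hψc.mono hsub).mul h1).mul h2).mul
      ((continuousOn_id.sub continuousOn_const).add
        (continuousOn_const.mul (hK.mono fun z hz => le_of_lt hz.1)))
  refine Integrable.mono' (g := fun _ => ψ φ * D * (φ + |lam / c| + lam0 * MK))
    (integrable_const _) (hcont.aestronglyMeasurable measurableSet_Ioo) ?_
  rw [ae_restrict_iff' measurableSet_Ioo]
  refine Filter.Eventually.of_forall fun z hz => ?_
  have hz0 := hz.1
  have hzφ := hz.2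
  have hv0 : 0 ≤ z ^ (γ - 2) * Real.exp (-β / z) :=
    mul_nonneg (Real.rpow_nonneg hz0.le _) (Real.exp_pos _).le
  have hψ0 : 0 < ψ z := hψpos z hz0
  have hMK0 : 0 ≤ MK := (abs_nonneg _).trans (hMK 0 le_rfl)
  rw [Real.norm_eq_abs, abs_mul, mul_assoc (ψ z)]
  have e1 : |ψ z * (z ^ (γ - 2) * Real.exp (-β / z))| = ψ z * (z ^ (γ - 2) * Real.exp (-β / z)) :=
    abs_of_nonneg (mul_nonneg hψ0.le hv0)
  rw [e1]
  have hq : |(z - lam / c) + lam0 * K z| ≤ φ + |lam / c| + lam0 * MK := by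
    have h1 : |z - lam / c| ≤ φ + |lam / c| := by
      have h2 : |z - lam/c| ≤ |z| + |lam/c| := abs_sub _ _
      rw [abs_of_pos hz0] at h2
      linarith
    have h3 : |lam0 * K z| ≤ lam0 * MK := by
      rw [abs_mul, abs_of_nonneg hlam0]
      exact mul_le_mul_of_nonneg_left (hMK z hz0.le) hlam0
    calc |(z - lam / c) + lam0 * K z| ≤ |z - lam/c| + |lam0 * K z| := abs_add_le _ _
      _ ≤ φ + |lam / c| + lam0 * MK := by linarith
  calc ψ z * (z ^ (γ - 2) * Real.exp (-β / z)) * |(z - lam / c) + lam0 * K z|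
      ≤ ψ φ * D * (φ + |lam / c| + lam0 * MK) := by
        apply mul_le_mul
        · exact mul_le_mul (hψmono z φ hz0 hzφ.le) (hD z hz) hv0 ((hψpos φ hφ).le)
        · exact hq
        · exact abs_nonneg _
        · exact mul_nonneg (hψpos φ hφ).le hD0

lemma rho_cont (γ β : ℝ) (ψ : ℝ → ℝ) (hψc : ContinuousOn ψ (Set.Ioi (0:ℝ))) :
    ContinuousOn (fun z : ℝ => ψ z * z ^ (γ - 2) * Real.exp (-β / z)) (Set.Ioi (0:ℝ)) := by
  have h1 : ContinuousOn (fun z : ℝ => z ^ (γ - 2)) (Set.Ioi (0:ℝ)) := fun z hz =>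
    (Real.continuousAt_rpow_const z _ (Or.inl (ne_of_gt hz))).continuousWithinAt
  have h2 : ContinuousOn (fun z : ℝ => Real.exp (-β / z)) (Set.Ioi (0:ℝ)) :=
    Real.continuous_exp.comp_continuousOn
      (continuousOn_const.div continuousOn_id fun z hz => ne_of_gt hz)
  exact (hψc.mul h1).mul h2

lemma hderiv_aux (lam lam0 μ a : ℝ) (hμ : μ ≠ 0) (γ β : ℝ)
    (hγ : γ = 2 * a / μ ^ 2) (hβ : β = 2 * lam / μ ^ 2)
    (ψ : ℝ → ℝ) (hψsmooth : ContDiffOn ℝ 2 ψ (Set.Ioi (0 : ℝ)))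
    (hψode : ∀ y : ℝ, 0 < y →
      μ ^ 2 / 2 * y ^ 2 * deriv (deriv ψ) y + (lam + a * y) * deriv ψ y
        = (lam + lam0) * ψ y)
    (z : ℝ) (hz : 0 < z) :
    HasDerivAt (fun y => deriv ψ y * y ^ γ * Real.exp (-β / y))
      (2 * (lam + lam0) / μ ^ 2 * (ψ z * z ^ (γ - 2) * Real.exp (-β / z))) z := by
  have hμ2 : μ ^ 2 ≠ 0 := pow_ne_zero _ hμ
  have hmem : Set.Ioi (0:ℝ) ∈ nhds z := Ioi_mem_nhds hz
  have hd1 : ContDiffOn ℝ 1 (deriv ψ) (Set.Ioi (0:ℝ)) :=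
    hψsmooth.deriv_of_isOpen isOpen_Ioi (m := 1) (by norm_num)
  have h1 : HasDerivAt (deriv ψ) (deriv (deriv ψ) z) z :=
    ((hd1.differentiableOn one_ne_zero).differentiableAt hmem).hasDerivAt
  have h2 : HasDerivAt (fun y : ℝ => y ^ γ) (γ * z ^ (γ - 1)) z :=
    Real.hasDerivAt_rpow_const (Or.inl hz.ne')
  have hinv : HasDerivAt (fun y : ℝ => -β / y) (β / z ^ 2) z := by
    have h := (hasDerivAt_inv hz.ne').const_mul (-β)
    have e : -β * -(z ^ 2)⁻¹ = β / z ^ 2 := by field_simp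
    rw [e] at h
    simpa [div_eq_mul_inv] using h
  have h3 : HasDerivAt (fun y : ℝ => Real.exp (-β / y))
      (Real.exp (-β / z) * (β / z ^ 2)) z := hinv.exp
  have h := (h1.mul h2).mul h3
  refine h.congr_deriv ?_; symm
  have e1 : z ^ γ = z ^ (γ - 2) * z ^ 2 := by
    rw [← Real.rpow_natCast z 2, ← Real.rpow_add hz]; norm_num
  have e2 : z ^ (γ - 1) = z ^ (γ - 2) * z := by
    rw [show γ - 1 = γ - 2 + 1 by ring, Real.rpow_add hz, Real.rpow_one]
  rw [Pi.mul_apply, e1, e2]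
  have hode' : μ ^ 2 * z ^ 2 * deriv (deriv ψ) z + 2 * (lam + a * z) * deriv ψ z
      = 2 * (lam + lam0) * ψ z := by linear_combination 2 * hψode z hz
  have hgb' : μ ^ 2 * (γ * z + β) = 2 * (a * z + lam) := by
    rw [hγ, hβ]; field_simp
  have hz2 : z ^ 2 ≠ 0 := pow_ne_zero _ hz.ne'
  have hzz : z ^ 2 * (β / z ^ 2) = β := by field_simp
  rw [div_mul_eq_mul_div, div_eq_iff hμ2]
  linear_combination (- z ^ (γ - 2) * Real.exp (-β / z)) * hode'
    + (- deriv ψ z * z ^ (γ - 2) * Real.exp (-β / z)) * hgb'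
    + (- μ ^ 2 * deriv ψ z * z ^ (γ - 2) * Real.exp (-β / z)) * hzz

lemma rho_integral (lam lam0 μ a : ℝ) (hμ : μ ≠ 0) (hlamlam0 : 0 < lam + lam0) (γ β : ℝ)
    (hγ : γ = 2 * a / μ ^ 2) (hβ : β = 2 * lam / μ ^ 2)
    (ψ : ℝ → ℝ) (hψsmooth : ContDiffOn ℝ 2 ψ (Set.Ioi (0 : ℝ)))
    (hψode : ∀ y : ℝ, 0 < y →
      μ ^ 2 / 2 * y ^ 2 * deriv (deriv ψ) y + (lam + a * y) * deriv ψ y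
        = (lam + lam0) * ψ y)
    (x y : ℝ) (hx : 0 < x) (hxy : x ≤ y) :
    ∫ z in Set.Ioo x y, ψ z * z ^ (γ - 2) * Real.exp (-β / z)
      = μ ^ 2 / (2 * (lam + lam0)) *
        ((deriv ψ y * y ^ γ * Real.exp (-β / y)) - (deriv ψ x * x ^ γ * Real.exp (-β / x))) := by
  have hμ2 : (0:ℝ) < μ ^ 2 := by positivity
  have hK0 : (0:ℝ) < 2 * (lam + lam0) / μ ^ 2 := by positivity
  have huIcc : Set.uIcc x y = Set.Icc x y := Set.uIcc_of_le hxy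
  have hsub : Set.Icc x y ⊆ Set.Ioi (0:ℝ) := fun z hz => lt_of_lt_of_le hx hz.1
  have hii : IntervalIntegrable (fun z : ℝ => 2 * (lam + lam0) / μ ^ 2 *
      (ψ z * z ^ (γ - 2) * Real.exp (-β / z))) volume x y := by
    apply ContinuousOn.intervalIntegrable
    rw [huIcc]
    exact continuousOn_const.mul ((rho_cont γ β ψ hψsmooth.continuousOn).mono hsub)
  have hftc := intervalIntegral.integral_eq_sub_of_hasDerivAt
    (f := fun y => deriv ψ y * y ^ γ * Real.exp (-β / y))
    (f' := fun z : ℝ => 2 * (lam + lam0) / μ ^ 2 * (ψ z * z ^ (γ - 2) * Real.exp (-β / z)))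
    (fun t ht => hderiv_aux lam lam0 μ a hμ γ β hγ hβ ψ hψsmooth hψode t
      (lt_of_lt_of_le hx (huIcc ▸ ht).1)) hii
  rw [intervalIntegral.integral_const_mul, intervalIntegral.integral_of_le hxy,
    integral_Ioc_eq_integral_Ioo] at hftc
  have h2 : ∫ z in Set.Ioo x y, ψ z * z ^ (γ - 2) * Real.exp (-β / z)
      = (deriv ψ y * y ^ γ * Real.exp (-β / y) - deriv ψ x * x ^ γ * Real.exp (-β / x))
        / (2 * (lam + lam0) / μ ^ 2) := by
    field_simp at hftc ⊢
    linarith [hftc]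
  rw [h2]; field_simp

/-- Lemma 4.2: for `w : [0,∞) → ℝ` bounded, continuous, nondecreasing and nonpositive,
(i) the integrand of `Gw` is integrable on `(0, φ)` for every `φ > 0`;
(ii) `(Gw)(φ) = 0` has exactly one solution `φ[w]` in `(0,∞)`;
(iii) `Gw < 0` on `(0, φ[w])` and `Gw > 0` on `(φ[w], ∞)`;
(iv) `φ_ℓ[w] ≤ φ[w] ≤ φ[w₀]`, where `φ_ℓ[w]` is the unique positive zero of
`g + λ₀ (Kw)` and `w₀ ≡ -sup_{x ≥ 0} |w(x)|`. -/
theorem lemma_4_2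
    {E : Type*} [MeasurableSpace E] (ν₀ : Measure E) [IsProbabilityMeasure ν₀]
    (f : E → ℝ) (hf : Measurable f) (hf0 : ∀ z, 0 ≤ f z)
    (lam lam0 lam1 c : ℝ)
    (hlam : 0 < lam) (hlam0 : 0 < lam0) (hlam1 : 0 < lam1) (hc : 0 < c)
    (μ a : ℝ) (hμ : μ ≠ 0) (γ β : ℝ) (hγ : γ = 2 * a / μ ^ 2) (hβ : β = 2 * lam / μ ^ 2)
    (ψ : ℝ → ℝ)
    (hψsmooth : ContDiffOn ℝ 2 ψ (Set.Ioi (0 : ℝ)))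
    (hψpos : ∀ y : ℝ, 0 < y → 0 < ψ y)
    (hψmono : ∀ x y : ℝ, 0 < x → x ≤ y → ψ x ≤ ψ y)
    (hψode : ∀ y : ℝ, 0 < y →
      μ ^ 2 / 2 * y ^ 2 * deriv (deriv ψ) y + (lam + a * y) * deriv ψ y
        = (lam + lam0) * ψ y)
    (hψgrowth : Filter.Tendsto (fun y : ℝ => deriv ψ y * y ^ γ * Real.exp (-β / y))
      Filter.atTop Filter.atTop)
    (w : ℝ → ℝ)
    (hwbdd : ∃ M : ℝ, ∀ x : ℝ, 0 ≤ x → |w x| ≤ M)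
    (hwcont : ContinuousOn w (Set.Ici (0 : ℝ)))
    (hwmono : ∀ x y : ℝ, 0 ≤ x → x ≤ y → w x ≤ w y)
    (hwnp : ∀ x : ℝ, 0 ≤ x → w x ≤ 0) :
    (∀ φ : ℝ, 0 < φ →
      IntegrableOn
        (fun z => ψ z * z ^ (γ - 2) * Real.exp (-β / z) *
          ((z - lam / c) + lam0 * Kop ν₀ f lam0 lam1 w z))
        (Set.Ioo (0 : ℝ) φ)) ∧
    ∃ φstar : ℝ, 0 < φstar ∧
      Gop ν₀ f lam lam0 lam1 c γ β ψ w φstar = 0 ∧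
      (∀ φ : ℝ, 0 < φ → Gop ν₀ f lam lam0 lam1 c γ β ψ w φ = 0 → φ = φstar) ∧
      (∀ φ : ℝ, 0 < φ → φ < φstar → Gop ν₀ f lam lam0 lam1 c γ β ψ w φ < 0) ∧
      (∀ φ : ℝ, φstar < φ → 0 < Gop ν₀ f lam lam0 lam1 c γ β ψ w φ) ∧
      (∀ φℓ : ℝ, 0 < φℓ →
        (φℓ - lam / c + lam0 * Kop ν₀ f lam0 lam1 w φℓ) = 0 → φℓ ≤ φstar) ∧
      (∀ φr : ℝ, 0 < φr →
        Gop ν₀ f lam lam0 lam1 c γ β ψ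
          (fun _ => -sSup ((fun x => |w x|) '' Set.Ici (0 : ℝ))) φr = 0 →
        φstar ≤ φr) := by
  obtain ⟨M, hM⟩ := hwbdd
  have hM0 : 0 ≤ M := (abs_nonneg _).trans (hM 0 le_rfl)
  have hc0 : 0 ≤ lam1 / lam0 := (div_pos hlam1 hlam0).le
  have hβ0 : 0 < β := by rw [hβ]; positivity
  have hKc := kop_continuousOn ν₀ f hf hf0 lam0 lam1 hc0 w M hM hwcont
  have hKb : ∀ φ : ℝ, 0 ≤ φ → |Kop ν₀ f lam0 lam1 w φ| ≤ M :=
    fun φ hφ => kop_abs_le ν₀ f hf hf0 lam0 lam1 hc0 w M hM hwcont hφ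
  have hKnp : ∀ z : ℝ, 0 ≤ z → Kop ν₀ f lam0 lam1 w z ≤ 0 :=
    fun z hz => kop_nonpos ν₀ f hf0 lam0 lam1 hc0 w hwnp hz
  set F : ℝ → ℝ := fun z => ψ z * z ^ (γ - 2) * Real.exp (-β / z) *
      ((z - lam / c) + lam0 * Kop ν₀ f lam0 lam1 w z) with hF
  set q : ℝ → ℝ := fun z => z - lam / c + lam0 * Kop ν₀ f lam0 lam1 w z with hqdef
  set ρ : ℝ → ℝ := fun z => ψ z * z ^ (γ - 2) * Real.exp (-β / z) with hρdef
  have hFρq : ∀ z : ℝ, F z = ρ z * q z := fun z => rfl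
  have hInt : ∀ φ : ℝ, 0 < φ → IntegrableOn F (Set.Ioo 0 φ) := fun φ hφ =>
    integrand_integrable γ β lam c lam0 hβ0 hlam0.le ψ (Kop ν₀ f lam0 lam1 w)
      hψsmooth.continuousOn hψpos hψmono hKc M hKb φ hφ
  have hGop : ∀ φ : ℝ, Gop ν₀ f lam lam0 lam1 c γ β ψ w φ = ∫ z in Set.Ioo (0:ℝ) φ, F z :=
    fun _ => rfl
  refine ⟨hInt, ?_⟩
  have hρpos : ∀ z : ℝ, 0 < z → 0 < ρ z := fun z hz =>
    mul_pos (mul_pos (hψpos z hz) (Real.rpow_pos_of_pos hz _)) (Real.exp_pos _)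
  have hqmono : ∀ x y : ℝ, 0 ≤ x → x < y → q x < q y := by
    intro x y hx hxy
    have h1 := kop_mono ν₀ f hf hf0 lam0 lam1 hc0 w M hM hwcont hwmono hx hxy.le
    have h2 := mul_le_mul_of_nonneg_left h1 hlam0.le
    simp only [hqdef]
    linarith
  set S : Set ℝ := {t : ℝ | 0 ≤ t ∧ 0 ≤ q t} with hSdef
  have hSne : S.Nonempty := by
    refine ⟨lam / c + lam0 * M, by positivity, ?_⟩
    have h1 : -M ≤ Kop ν₀ f lam0 lam1 w (lam / c + lam0 * M) :=
      (abs_le.1 (hKb _ (by positivity))).1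
    have h2 := mul_le_mul_of_nonneg_left h1 hlam0.le
    simp only [hqdef]
    nlinarith
  have hSbb : BddBelow S := ⟨0, fun t ht => ht.1⟩
  set z₀ : ℝ := sInf S with hz₀def
  have hz₀lb : lam / c ≤ z₀ := by
    apply le_csInf hSne
    intro t ht
    by_contra hcon
    push_neg at hcon
    have hKt := hKnp t ht.1
    have hq : q t < 0 := by
      simp only [hqdef]
      nlinarith [mul_nonpos_of_nonneg_of_nonpos hlam0.le hKt]
    linarith [ht.2]
  have hz₀pos : 0 < z₀ := lt_of_lt_of_le (by positivity) hz₀lb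
  have hqneg : ∀ z : ℝ, 0 < z → z < z₀ → q z < 0 := by
    intro z hz hzz
    by_contra hcon
    push_neg at hcon
    exact absurd (csInf_le hSbb ⟨hz.le, hcon⟩) (not_le.2 hzz)
  have hqpos : ∀ z : ℝ, z₀ < z → 0 < q z := by
    intro z hzz
    obtain ⟨t, htS, htz⟩ := exists_lt_of_csInf_lt hSne hzz
    exact lt_of_le_of_lt htS.2 (hqmono t z htS.1 htz)
  -- strict negativity of G up to z₀
  have hGneg : ∀ φ : ℝ, 0 < φ → φ ≤ z₀ → (∫ z in Set.Ioo (0:ℝ) φ, F z) < 0 := by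
    intro φ hφ hφz
    have hneg : ∀ z ∈ Set.Ioo (0:ℝ) φ, F z < 0 := fun z hz => by
      rw [hFρq]
      exact mul_neg_of_pos_of_neg (hρpos z hz.1) (hqneg z hz.1 (lt_of_lt_of_le hz.2 hφz))
    have h1 : 0 < ∫ z in Set.Ioo (0:ℝ) φ, -F z := by
      rw [setIntegral_pos_iff_support_of_nonneg_ae]
      · refine lt_of_lt_of_le ?_ (measure_mono
          (Set.subset_inter (fun z hz => ?_) Set.Subset.rfl))
        · rw [Real.volume_Ioo]
          exact ENNReal.ofReal_pos.2 (by linarith)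
        · exact ne_of_gt (neg_pos.2 (hneg z hz))
      · exact (ae_restrict_iff' measurableSet_Ioo).2
          (Filter.Eventually.of_forall fun z hz => (neg_pos.2 (hneg z hz)).le)
      · exact (hInt φ hφ).neg
    rw [integral_neg] at h1
    linarith
  -- splitting
  have hsplit : ∀ x y : ℝ, 0 < x → x ≤ y →
      (∫ z in Set.Ioo (0:ℝ) y, F z)
        = (∫ z in Set.Ioo (0:ℝ) x, F z) + ∫ z in Set.Ioo x y, F z := by
    intro x y hx hxy
    have hy : 0 < y := lt_of_lt_of_le hx hxy
    have hu : Set.Ioo 0 x ∪ Set.Ico x y = Set.Ioo 0 y := Set.Ioo_union_Ico_eq_Ioo hx hxy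
    have hd : Disjoint (Set.Ioo (0:ℝ) x) (Set.Ico x y) := by
      rw [Set.disjoint_left]; rintro z ⟨_, h1⟩ ⟨h2, _⟩; exact absurd h2 (not_le.2 h1)
    have hi1 : IntegrableOn F (Set.Ioo (0:ℝ) x) :=
      (hInt y hy).mono_set (fun z hz => ⟨hz.1, lt_of_lt_of_le hz.2 hxy⟩)
    have hi2 : IntegrableOn F (Set.Ico x y) :=
      (hInt y hy).mono_set (fun z hz => ⟨lt_of_lt_of_le hx hz.1, hz.2⟩)
    rw [← hu, setIntegral_union hd measurableSet_Ico hi1 hi2, integral_Ico_eq_integral_Ioo]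
  have hposIoo : ∀ x y : ℝ, z₀ ≤ x → x < y → 0 < ∫ z in Set.Ioo x y, F z := by
    intro x y hx hxy
    have hx0 : 0 < x := lt_of_lt_of_le hz₀pos hx
    have hy : 0 < y := hx0.trans hxy
    have hposF : ∀ z ∈ Set.Ioo x y, 0 < F z := fun z hz => by
      rw [hFρq]
      exact mul_pos (hρpos z (hx0.trans hz.1)) (hqpos z (lt_of_le_of_lt hx hz.1))
    rw [setIntegral_pos_iff_support_of_nonneg_ae]
    · refine lt_of_lt_of_le ?_ (measure_mono
        (Set.subset_inter (fun z hz => ?_) Set.Subset.rfl))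
      · rw [Real.volume_Ioo]
        exact ENNReal.ofReal_pos.2 (by linarith)
      · exact ne_of_gt (hposF z hz)
    · exact (ae_restrict_iff' measurableSet_Ioo).2
        (Filter.Eventually.of_forall fun z hz => (hposF z hz).le)
    · exact (hInt y hy).mono_set (fun z hz => ⟨hx0.trans hz.1, hz.2⟩)
  have hGmono : ∀ x y : ℝ, z₀ ≤ x → x < y →
      (∫ z in Set.Ioo (0:ℝ) x, F z) < ∫ z in Set.Ioo (0:ℝ) y, F z := by
    intro x y hx hxy
    rw [hsplit x y (lt_of_lt_of_le hz₀pos hx) hxy.le]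
    linarith [hposIoo x y hx hxy]
  have hGcont : ∀ b : ℝ, 0 < b →
      ContinuousOn (fun φ => ∫ z in Set.Ioo (0:ℝ) φ, F z) (Set.Icc 0 b) := by
    intro b hb
    have hIcc : IntegrableOn F (Set.Icc 0 b) := (hInt b hb).congr_set_ae Ioo_ae_eq_Icc.symm
    exact (intervalIntegral.continuousOn_primitive (μ := volume) hIcc).congr
      (fun x hx => integral_Ioc_eq_integral_Ioo.symm)
  -- growth
  have hlamlam0 : 0 < lam + lam0 := by linarith
  have hμ2 : (0:ℝ) < μ ^ 2 := pow_two_pos_of_ne_zero hμ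
  set h : ℝ → ℝ := fun y => deriv ψ y * y ^ γ * Real.exp (-β / y) with hhdef
  set C1 : ℝ := μ ^ 2 / (2 * (lam + lam0)) with hC1def
  have hC1pos : 0 < C1 := div_pos hμ2 (by linarith)
  set z₁ : ℝ := z₀ + 1 with hz₁def
  have hz₁pos : 0 < z₁ := by simp only [hz₁def]; linarith
  have hq1 : 0 < q z₁ := hqpos z₁ (by simp only [hz₁def]; linarith)
  have hrhoInt : ∀ y : ℝ, z₁ ≤ y →
      (∫ z in Set.Ioo z₁ y, ρ z) = C1 * (h y - h z₁) := fun y hy =>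
    rho_integral lam lam0 μ a hμ hlamlam0 γ β hγ hβ ψ hψsmooth hψode z₁ y hz₁pos hy
  have hGlb : ∀ φ : ℝ, z₁ ≤ φ →
      (∫ z in Set.Ioo (0:ℝ) z₁, F z) + q z₁ * (C1 * (h φ - h z₁))
        ≤ ∫ z in Set.Ioo (0:ℝ) φ, F z := by
    intro φ hφ
    have hφ0 : 0 < φ := lt_of_lt_of_le hz₁pos hφ
    rw [hsplit z₁ φ hz₁pos hφ]
    have hmono : ∀ z ∈ Set.Ioo z₁ φ, q z₁ * ρ z ≤ F z := by
      intro z hz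
      have hz0 : 0 < z := hz₁pos.trans hz.1
      have hq2 : q z₁ ≤ q z := (hqmono z₁ z hz₁pos.le hz.1).le
      rw [hFρq, mul_comm (ρ z) (q z)]
      exact mul_le_mul_of_nonneg_right hq2 (hρpos z hz0).le
    have hint1 : IntegrableOn (fun z => q z₁ * ρ z) (Set.Ioo z₁ φ) := by
      have hcont : ContinuousOn ρ (Set.Icc z₁ φ) :=
        (rho_cont γ β ψ hψsmooth.continuousOn).mono (fun z hz => lt_of_lt_of_le hz₁pos hz.1)
      exact ((hcont.integrableOn_Icc).mono_set Set.Ioo_subset_Icc_self).const_mul _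
    have hint2 : IntegrableOn F (Set.Ioo z₁ φ) :=
      (hInt φ hφ0).mono_set (fun z hz => ⟨hz₁pos.trans hz.1, hz.2⟩)
    have h2 := setIntegral_mono_on hint1 hint2 measurableSet_Ioo hmono
    rw [integral_const_mul, hrhoInt φ hφ] at h2
    linarith
  obtain ⟨φ₂, hφ₂T, hφ₂z₁⟩ := ((hψgrowth.eventually_gt_atTop
      (h z₁ + (1 - (∫ z in Set.Ioo (0:ℝ) z₁, F z)) / (q z₁ * C1))).and
      (Filter.eventually_ge_atTop z₁)).exists
  have hGφ₂ : 0 < ∫ z in Set.Ioo (0:ℝ) φ₂, F z := by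
    have hlb := hGlb φ₂ hφ₂z₁
    have hqc : 0 < q z₁ * C1 := mul_pos hq1 hC1pos
    have hd : (1 - (∫ z in Set.Ioo (0:ℝ) z₁, F z)) / (q z₁ * C1) < h φ₂ - h z₁ := by
      linarith
    have h3 := (div_lt_iff₀ hqc).1 hd
    nlinarith
  -- IVT
  have hz₀z₁ : z₀ < z₁ := by simp only [hz₁def]; linarith
  have hz₀φ₂ : z₀ ≤ φ₂ := le_of_lt (lt_of_lt_of_le hz₀z₁ hφ₂z₁)
  have hφ₂pos : 0 < φ₂ := lt_of_lt_of_le hz₁pos hφ₂z₁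
  have hGz₀ : (∫ z in Set.Ioo (0:ℝ) z₀, F z) < 0 := hGneg z₀ hz₀pos le_rfl
  obtain ⟨φstar, hφstarmem, hφstar0⟩ :=
    intermediate_value_Ioo hz₀φ₂ ((hGcont φ₂ hφ₂pos).mono (Set.Icc_subset_Icc_left hz₀pos.le))
      (Set.mem_Ioo.2 ⟨hGz₀, hGφ₂⟩)
  have hφstarz₀ : z₀ < φstar := hφstarmem.1
  have hφstarpos : 0 < φstar := hz₀pos.trans hφstarz₀
  -- the negativity / positivity statements
  have hneg : ∀ φ : ℝ, 0 < φ → φ < φstar → (∫ z in Set.Ioo (0:ℝ) φ, F z) < 0 := by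
    intro φ hφ hlt
    rcases le_or_gt φ z₀ with hle | hgt
    · exact hGneg φ hφ hle
    · calc (∫ z in Set.Ioo (0:ℝ) φ, F z) < ∫ z in Set.Ioo (0:ℝ) φstar, F z :=
          hGmono φ φstar hgt.le hlt
        _ = 0 := hφstar0
  have hpos : ∀ φ : ℝ, φstar < φ → 0 < ∫ z in Set.Ioo (0:ℝ) φ, F z := by
    intro φ hlt
    calc (0:ℝ) = ∫ z in Set.Ioo (0:ℝ) φstar, F z := hφstar0.symm
      _ < ∫ z in Set.Ioo (0:ℝ) φ, F z := hGmono φstar φ hφstarz₀.le hlt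
  refine ⟨φstar, hφstarpos, by rw [hGop]; exact hφstar0, ?_, ?_, ?_, ?_, ?_⟩
  · -- uniqueness
    intro φ hφ hG0
    rw [hGop] at hG0
    rcases lt_trichotomy φ φstar with hlt | heq | hgt
    · exact absurd hG0 (ne_of_lt (hneg φ hφ hlt))
    · exact heq
    · exact absurd hG0.symm (ne_of_lt (hpos φ hgt))
  · intro φ hφ hlt
    rw [hGop]
    exact hneg φ hφ hlt
  · intro φ hlt
    rw [hGop]
    exact hpos φ hlt
  · -- φℓ ≤ φstar
    intro φℓ hφℓ hq0
    have hq0' : q φℓ = 0 := hq0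
    have hle : φℓ ≤ z₀ := by
      apply le_csInf hSne
      intro t ht
      by_contra hcon
      push_neg at hcon
      have := hqmono t φℓ ht.1 hcon
      rw [hq0'] at this
      linarith [ht.2]
    linarith
  · -- φstar ≤ φr
    intro φr hφr hG0
    set S₀ : ℝ := sSup ((fun x => |w x|) '' Set.Ici (0:ℝ)) with hS₀def
    have hbddA : BddAbove ((fun x => |w x|) '' Set.Ici (0:ℝ)) := by
      refine ⟨M, ?_⟩; rintro _ ⟨x, hx, rfl⟩; exact hM x hx
    have hS₀0 : 0 ≤ S₀ :=
      le_trans (abs_nonneg (w 0)) (le_csSup hbddA ⟨0, Set.self_mem_Ici, rfl⟩)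
    have hKconst : ∀ z : ℝ, Kop ν₀ f lam0 lam1 (fun _ => -S₀) z = -S₀ := by
      intro z; simp [Kop]
    have hGeq : Gop ν₀ f lam lam0 lam1 c γ β ψ (fun _ => -S₀) φr
        = ∫ z in Set.Ioo (0:ℝ) φr,
          ψ z * z ^ (γ - 2) * Real.exp (-β / z) * ((z - lam / c) + lam0 * (-S₀)) := by
      rw [Gop]
      exact setIntegral_congr_fun measurableSet_Ioo (fun z hz => by rw [hKconst])
    rw [hGeq] at hG0
    have hG0' : (∫ z in Set.Ioo (0:ℝ) φr,
        ψ z * z ^ (γ - 2) * Real.exp (-β / z) * ((z - lam / c) + lam0 * (-S₀))) = 0 := hG0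
    have hint0 : IntegrableOn (fun z =>
        ψ z * z ^ (γ - 2) * Real.exp (-β / z) * ((z - lam / c) + lam0 * (-S₀)))
        (Set.Ioo (0:ℝ) φr) := by
      have := integrand_integrable γ β lam c lam0 hβ0 hlam0.le ψ (fun _ => -S₀)
        hψsmooth.continuousOn hψpos hψmono continuousOn_const S₀
        (fun z hz => by rw [abs_neg, abs_of_nonneg hS₀0]) φr hφr
      exact this
    have hmono2 : ∀ z ∈ Set.Ioo (0:ℝ) φr,
        ψ z * z ^ (γ - 2) * Real.exp (-β / z) * ((z - lam / c) + lam0 * (-S₀)) ≤ F z := by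
      intro z hz
      have hρ0 : 0 ≤ ρ z := (hρpos z hz.1).le
      have hKl : -S₀ ≤ Kop ν₀ f lam0 lam1 w z :=
        kop_lower ν₀ f hf hf0 lam0 lam1 hc0 w hwcont ⟨M, hM⟩ hz.1.le
      have h1 : lam0 * (-S₀) ≤ lam0 * Kop ν₀ f lam0 lam1 w z :=
        mul_le_mul_of_nonneg_left hKl hlam0.le
      rw [hFρq]
      exact mul_le_mul_of_nonneg_left (by linarith) hρ0
    have hle : (0:ℝ) ≤ ∫ z in Set.Ioo (0:ℝ) φr, F z := by
      have hmn := setIntegral_mono_on hint0 (hInt φr hφr) measurableSet_Ioo hmono2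
      rw [hG0'] at hmn
      exact hmn
    by_contra hcon
    push_neg at hcon
    exact absurd (hneg φr hφr hcon) (not_lt.2 hle)
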